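/- Merging common prefixes of the token cycles in the detokenizing FST into a trie does not change the transduction relation: the compact (trie-based) detokenizing FST computes the same function D : V* → Σ* as the original FST with disjoint cycles. -/

import Mathlib

/-- A finite-state transducer: initial state, final states, and edges with
optional input and output labels (`none` meaning ε). -/
structure FST (α β Q : Type) where
  init : Q
  final : Set Q
  E : Set (Q × Option α × Option β × Q)

namespace FST

variable {α β Q : Type}

/-- `Path T q x w q'` : there is a path of consecutive edges from `q` to `q'`
whose input labels (ignoring ε) concatenate to `x` and output labels to `w`. -/
inductive Path (T : FST α β Q) : Q → List α → List β → Q → Prop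
  | nil (q : Q) : Path T q [] [] q
  | cons {q q' q'' : Q} {i : Option α} {o : Option β} {x : List α} {w : List β} :
      (q, i, o, q') ∈ T.E → Path T q' x w q'' →
      Path T q (i.toList ++ x) (o.toList ++ w) q''

/-- The relation computed by an FST: accepting paths from the initial state. -/
def Relates (T : FST α β Q) (x : List α) (w : List β) : Prop :=
  ∃ qf ∈ T.final, T.Path T.init x w qf

/-- `IsPathList T q es q'` : `es` is a list of consecutive edges of `T` from `q` to `q'`. -/
def IsPathList (T : FST α β Q) : Q → List (Q × Option α × Option β × Q) → Q → Prop
  | q, [], q' => q = q'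
  | q, e :: es, q' => e ∈ T.E ∧ e.1 = q ∧ IsPathList T e.2.2.2 es q'

end FST

section Detok

variable {σ V : Type}

/-- Detokenization map: concatenate the string associated to each token. -/
def detok (d : V → List σ) (x : List V) : List σ :=
  (x.map d).flatten

/-- Source state of the `i`-th edge of the cycle for token `v`
(`none` is the root state `q_r`). -/
def detokSrc (v : V) (i : ℕ) : Option (V × ℕ) :=
  if i = 0 then none else some (v, i)

/-- Target state of the `i`-th edge of the cycle for token `v`. -/
def detokTgt (d : V → List σ) (v : V) (i : ℕ) : Option (V × ℕ) :=
  if i + 1 = (d v).length then none else some (v, i + 1)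

/-- Input label of the `i`-th edge of the cycle for token `v`:
the last edge consumes `v`, all others consume ε. -/
def detokInp (d : V → List σ) (v : V) (i : ℕ) : Option V :=
  if i + 1 = (d v).length then some v else none

/-- Edges of the detokenizing FST `T_V` (Algorithm 1): one cycle per token `v`
from the root back to the root, outputting the characters of `d v` in order. -/
def detokE (d : V → List σ) : Set (Option (V × ℕ) × Option V × Option σ × Option (V × ℕ)) :=
  { e | ∃ (v : V) (i : ℕ) (h : i < (d v).length),
      e = (detokSrc v i, detokInp d v i, some ((d v).get ⟨i, h⟩), detokTgt d v i) }

/-- The detokenizing FST `T_V`: root state `none` is both initial and final. -/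
def detokFST (d : V → List σ) : FST V σ (Option (V × ℕ)) :=
  ⟨none, {none}, detokE d⟩

end Detok

section Compact

variable {σ V : Type}

/-- Edges of the compact (trie-based) detokenizing FST.  States are the proper
prefixes of the detokenizations `d v`, with the root being `[]`: non-final edges
extend a shared proper prefix by one output character, and final edges consume
the whole token `v`, output its last character, and return to the root. -/
def compactE (d : V → List σ) : Set (List σ × Option V × Option σ × List σ) :=
  { e | (∃ (p : List σ) (c : σ), e = (p, none, some c, p ++ [c]) ∧
          ∃ v : V, (p ++ [c]) <+: d v ∧ p ++ [c] ≠ d v) ∨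
        ∃ (p : List σ) (c : σ) (v : V), e = (p, some v, some c, []) ∧ p ++ [c] = d v }

/-- The compact trie-based detokenizing FST. -/
def compactFST (d : V → List σ) : FST V σ (List σ) :=
  ⟨[], {[]}, compactE d⟩

end Compact


namespace FST
variable {α β Q : Type}
theorem Path.append {T : FST α β Q} {q q' q'' : Q} {x x' : List α} {w w' : List β}
    (h : T.Path q x w q') (h' : T.Path q' x' w' q'') :
    T.Path q (x ++ x') (w ++ w') q'' := by
  induction h with
  | nil => simpa using h'
  | cons he _ ih => simpa [List.append_assoc] using Path.cons he (ih h')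

end FST

section proofs
variable {σ V : Type}

theorem detok_nil' (d : V → List σ) : detok d [] = [] := rfl
theorem detok_cons' (d : V → List σ) (v : V) (x : List V) :
    detok d (v :: x) = d v ++ detok d x := rfl

def detokInv (d : V → List σ) : Option (V × ℕ) → List V → List σ → Prop
  | none, x, w => w = detok d x
  | some (v, i), x, w => ∃ x', x = v :: x' ∧ w = (d v).drop i ++ detok d x'

theorem detok_sound (d : V → List σ) {q : Option (V × ℕ)} {x : List V} {w : List σ}
    (h : (detokFST d).Path q x w none) : detokInv d q x w := by
  generalize hq : (none : Option (V × ℕ)) = qf at h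
  induction h with
  | nil q => subst hq; rfl
  | @cons q q' q'' i o x w he hp ih =>
    obtain ⟨v, j, hj, heq⟩ := he
    simp only [Prod.mk.injEq] at heq
    obtain ⟨rfl, rfl, rfl, rfl⟩ := heq
    have ih := ih hq
    set c : σ := (d v).get ⟨j, hj⟩ with hc
    have hc' : (d v).drop j = c :: (d v).drop (j + 1) := by
      rw [List.drop_eq_getElem_cons hj]; rfl
    by_cases hlast : j + 1 = (d v).length
    · rw [show detokInp d v j = some v from if_pos hlast]
      rw [show detokTgt d v j = none from if_pos hlast] at ih
      have hw : w = detok d x := ih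
      have hfin : (d v).drop j = [c] := by
        rw [hc', show (d v).drop (j + 1) = [] from by rw [hlast]; exact List.drop_length]
      by_cases hj0 : j = 0
      · subst hj0
        rw [show detokSrc v 0 = none from if_pos rfl]
        show c :: w = d v ++ detok d x
        rw [hw, show d v = [c] from by rw [← (List.drop_zero : List.drop 0 (d v) = d v)]; exact hfin]
        rfl
      · rw [show detokSrc v j = some (v, j) from if_neg hj0]
        exact ⟨x, rfl, by show c :: w = (d v).drop j ++ detok d x; rw [hfin, hw]; rfl⟩
    · rw [show detokInp d v j = none from if_neg hlast]
      rw [show detokTgt d v j = some (v, j + 1) from if_neg hlast] at ih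
      obtain ⟨x', hx, hw⟩ : ∃ x', x = v :: x' ∧ w = (d v).drop (j + 1) ++ detok d x' := ih
      subst hx; subst hw
      by_cases hj0 : j = 0
      · subst hj0
        rw [show detokSrc v 0 = none from if_pos rfl]
        show c :: ((d v).drop (0 + 1) ++ detok d x') = d v ++ detok d x'
        have hdv : d v = c :: (d v).drop (0 + 1) := by
          conv_lhs => rw [← (List.drop_zero : List.drop 0 (d v) = d v)]
          exact hc'
        conv_rhs => rw [hdv]
        rfl
      · rw [show detokSrc v j = some (v, j) from if_neg hj0]
        refine ⟨x', rfl, ?_⟩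
        show c :: ((d v).drop (j + 1) ++ detok d x') = (d v).drop j ++ detok d x'
        conv_rhs => rw [hc']
        rfl

theorem detok_cycle (d : V → List σ) (v : V) :
    ∀ k i, i + k = (d v).length → 0 < k →
      (detokFST d).Path (detokSrc v i) [v] ((d v).drop i) none := by
  intro k
  induction k with
  | zero => omega
  | succ n ih =>
    intro i hik _
    have hi : i < (d v).length := by omega
    set c : σ := (d v).get ⟨i, hi⟩ with hc
    have hedge : (detokSrc v i, detokInp d v i, some c, detokTgt d v i)
        ∈ (detokFST d).E := ⟨v, i, hi, rfl⟩
    have hc' : (d v).drop i = c :: (d v).drop (i + 1) := by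
      rw [List.drop_eq_getElem_cons hi]; rfl
    by_cases hlast : i + 1 = (d v).length
    · rw [show detokInp d v i = some v from if_pos hlast,
        show detokTgt d v i = none from if_pos hlast] at hedge
      rw [show (d v).drop i = [c] from by
        rw [hc', show (d v).drop (i + 1) = [] from by rw [hlast]; exact List.drop_length]]
      exact FST.Path.cons hedge (FST.Path.nil none)
    · rw [show detokInp d v i = none from if_neg hlast,
        show detokTgt d v i = some (v, i + 1) from if_neg hlast] at hedge
      have hrec := ih (i + 1) (by omega) (by omega)
      rw [show detokSrc v (i + 1) = some (v, i + 1) from if_neg (by omega)] at hrec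
      rw [hc']
      exact FST.Path.cons hedge hrec

theorem detok_complete (d : V → List σ) (hd : ∀ v, d v ≠ []) (x : List V) :
    (detokFST d).Path none x (detok d x) none := by
  induction x with
  | nil => exact FST.Path.nil none
  | cons v x ih =>
    have h1 := detok_cycle d v ((d v).length) 0 (Nat.zero_add _)
      (List.length_pos_iff.mpr (hd v))
    rw [show detokSrc v 0 = none from if_pos rfl, List.drop_zero] at h1
    exact h1.append ih

theorem compact_sound (d : V → List σ) {p : List σ} {x : List V} {w : List σ}
    (h : (compactFST d).Path p x w []) : p ++ w = detok d x := by
  generalize hq : ([] : List σ) = qf at h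
  induction h with
  | nil q => subst hq; simp [detok]
  | @cons q q' q'' i o x w he hp ih =>
    have ih := ih hq
    rcases he with ⟨p', c, heq, _⟩ | ⟨p', c, v, heq, hdv⟩ <;>
      (simp only [Prod.mk.injEq] at heq; obtain ⟨rfl, rfl, rfl, rfl⟩ := heq)
    · show q ++ (c :: w) = detok d x
      rw [List.append_cons]
      exact ih
    · have hw : w = detok d x := by simpa using ih
      show q ++ (c :: w) = detok d (v :: x)
      rw [hw, detok_cons', ← hdv, List.append_cons]

theorem compact_cycle (d : V → List σ) (v : V) :
    ∀ s p, p ++ s = d v → s ≠ [] → (compactFST d).Path p [v] s [] := by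
  intro s
  induction s with
  | nil => simp
  | cons c s ih =>
    intro p hps _
    cases s with
    | nil =>
      have hedge : (p, some v, some c, ([] : List σ)) ∈ (compactFST d).E :=
        Or.inr ⟨p, c, v, rfl, hps⟩
      exact FST.Path.cons hedge (FST.Path.nil [])
    | cons c' s' =>
      have hedge : (p, none, some c, p ++ [c]) ∈ (compactFST d).E := by
        refine Or.inl ⟨p, c, rfl, v, ⟨c' :: s', by simpa using hps⟩, ?_⟩
        intro hcon
        rw [← hps] at hcon
        simp at hcon
      have hrec := ih (p ++ [c]) (by simpa using hps) (by simp)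
      exact FST.Path.cons hedge hrec

theorem compact_complete (d : V → List σ) (hd : ∀ v, d v ≠ []) (x : List V) :
    (compactFST d).Path [] x (detok d x) [] := by
  induction x with
  | nil => exact FST.Path.nil []
  | cons v x ih =>
    exact (compact_cycle d v (d v) [] rfl (hd v)).append ih

end proofs

/-- Merging common prefixes of the token cycles of the
detokenizing FST into a trie does not change the transduction relation: the
compact FST computes the same function `D : V* → Σ*` as the original FST. -/
theorem compactFST_eq_detokFST {σ V : Type} [Fintype V]
    (d : V → List σ) (hd : ∀ v, d v ≠ []) :
    ∀ (x : List V) (w : List σ),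
      ((compactFST d).Relates x w ↔ (detokFST d).Relates x w) ∧
        ((compactFST d).Relates x w ↔ w = detok d x) := by
  intro x w
  have hc : (compactFST d).Relates x w ↔ w = detok d x := by
    constructor
    · rintro ⟨qf, hqf, hp⟩
      have : qf = [] := hqf
      subst this
      simpa [compactFST] using compact_sound d hp
    · rintro rfl
      exact ⟨[], rfl, compact_complete d hd x⟩
  have hdet : (detokFST d).Relates x w ↔ w = detok d x := by
    constructor
    · rintro ⟨qf, hqf, hp⟩
      have : qf = none := hqf
      subst this
      exact detok_sound d hp
    · rintro rfl
      exact ⟨none, rfl, detok_complete d hd x⟩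
  exact ⟨hc.trans hdet.symm, hc⟩
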